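/- Let F be a positive CNF formula with k ≥ 1 variables and n ≥ 1 clauses (each clause a nonempty subset of the variables). Then every connected dominating set S of G_F contains the vertex u_0 and satisfies |S ∩ V(H_{2n+7})| ≥ 2n + 8, where V(H_{2n+7}) denotes the vertex set of the copy of H_{2n+7} in G_F. -/

import Mathlib

namespace CDG

/-- Vertices of the graph `B`. -/
inductive BVert : Type
  | a | e | b | b' | h | k | f1 | g1 | f2 | g2

/-- The edges of the graph `B`. -/
def BRel : BVert → BVert → Prop
  | .a, .e => True
  | .e, .b => True
  | .b, .b' => True
  | .a, .h => True
  | .h, .e => True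
  | .e, .f1 => True
  | .f1, .b => True
  | .b, .f2 => True
  | .f2, .e => True
  | .e, .g1 => True
  | .g1, .f1 => True
  | .e, .g2 => True
  | .g2, .f2 => True
  | .h, .k => True
  | .k, .a => True
  | _, _ => False

/-- The graph `B`. -/
def graphB : SimpleGraph BVert := SimpleGraph.fromRel BRel

/-- `S` is a connected dominating set of `G`: every vertex is in `S` or adjacent to a
vertex of `S`, and the subgraph induced by `S` is connected. -/
def IsConnDomSet {V : Type*} (G : SimpleGraph V) (S : Set V) : Prop :=
  (∀ v : V, v ∈ S ∨ ∃ u ∈ S, G.Adj u v) ∧ (G.induce S).Connected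

/-- The connected domination number of `G`. -/
noncomputable def connDomNum {V : Type*} (G : SimpleGraph V) : ℕ :=
  sInf {m | ∃ S : Set V, IsConnDomSet G S ∧ S.ncard = m}

/-- Vertices of the graph `H n`: `u i` is `u_i` for `0 ≤ i ≤ n+1`, `x t` is `x_{t+1}` and
`y t` is `y_{t+1}` for `0 ≤ t ≤ n-2`. -/
inductive HVert (n : ℕ) : Type
  | u : Fin (n + 2) → HVert n
  | x : Fin (n - 1) → HVert n
  | y : Fin (n - 1) → HVert n

/-- The edges of the graph `H n`. -/
def HRel (n : ℕ) : HVert n → HVert n → Prop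
  | .u i, .u j => (j : ℕ) = (i : ℕ) + 1
  | .u i, .x t => (i : ℕ) = (t : ℕ) + 1 ∨ (i : ℕ) = (t : ℕ) + 2
  | .x t, .y s => t = s
  | .y s, .u i => (i : ℕ) = (s : ℕ) + 2
  | _, _ => False

/-- The graph `H n`. -/
def graphH (n : ℕ) : SimpleGraph (HVert n) := SimpleGraph.fromRel (HRel n)

/-- Vertices of the graph `C m`: `cc i` is `c^{i+1}` and `dd i` is `d^{i+1}` for `0 ≤ i ≤ m-1`. -/
inductive CVert (m : ℕ) : Type
  | c : CVert m
  | d : CVert m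
  | cc : Fin m → CVert m
  | dd : Fin m → CVert m

/-- The edges of the graph `C m`. -/
def CRel (m : ℕ) : CVert m → CVert m → Prop
  | .c, .d => True
  | .c, .dd _ => True
  | .cc i, .dd j => i = j
  | _, _ => False

/-- The graph `C m`. -/
def graphC (m : ℕ) : SimpleGraph (CVert m) := SimpleGraph.fromRel (CRel m)

/-- Vertices of the graph `A`. -/
inductive AVert : Type
  | p1 | p2 | p3 | q1 | q2 | r1 | r2

/-- The edges of the graph `A`. -/
def ARel : AVert → AVert → Prop
  | .p1, .p2 => True
  | .p2, .p3 => True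
  | .p1, .q1 => True
  | .q1, .r1 => True
  | .p2, .q1 => True
  | .p2, .r1 => True
  | .p2, .q2 => True
  | .q2, .r2 => True
  | .p3, .q2 => True
  | .p3, .r2 => True
  | _, _ => False

/-- Vertices of the graph `G_F`, for a formula with `k` variables and `n` clauses:
`k` copies of `B`, `n` copies of `C n`, one copy of `H (2n+7)`, and a copy of `A`
exactly when `k` is odd (realized as `AVert × Fin (k % 2)`). -/
abbrev GVert (k n : ℕ) : Type :=
  (Fin k × BVert) ⊕ (Fin n × CVert n) ⊕ HVert (2 * n + 7) ⊕ (AVert × Fin (k % 2))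

/-- The edges of the graph `G_F`, where the formula `F` assigns to each clause `j`
the (nonempty) set of variables appearing in it. -/
def GRel (k n : ℕ) (F : Fin n → Finset (Fin k)) : GVert k n → GVert k n → Prop
  | .inl (i, v), .inl (i', w) => i = i' ∧ BRel v w
  | .inr (.inl (j, v)), .inr (.inl (j', w)) => j = j' ∧ CRel n v w
  | .inr (.inr (.inl v)), .inr (.inr (.inl w)) => HRel (2 * n + 7) v w
  | .inr (.inr (.inr (v, _))), .inr (.inr (.inr (w, _))) => ARel v w
  | .inr (.inl (j, v)), .inl (i, w) =>
      i ∈ F j ∧ w = .a ∧ (v = .c ∨ ∃ t, v = .cc t)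
  | .inr (.inr (.inl v)), .inl (i, w) =>
      v = .u ⟨0, by omega⟩ ∧ (w = .a ∨ w = .b)
  | .inr (.inr (.inr (v, _))), .inr (.inr (.inl w)) =>
      v = .p1 ∧ w = .u ⟨0, by omega⟩
  | _, _ => False

/-- The graph `G_F`. -/
def graphGF (k n : ℕ) (F : Fin n → Finset (Fin k)) : SimpleGraph (GVert k n) :=
  SimpleGraph.fromRel (GRel k n F)

/-- Vertices of the graph `G'_F`, for a formula with `k` variables and `n` clauses:
`k` copies of `B`, `n` copies of `C n`, one copy of `H 6`, and a copy of `A`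
exactly when `k` is odd (realized as `AVert × Fin (k % 2)`). -/
abbrev GVert' (k n : ℕ) : Type :=
  (Fin k × BVert) ⊕ (Fin n × CVert n) ⊕ HVert 6 ⊕ (AVert × Fin (k % 2))

/-- The edges of the graph `G'_F`. -/
def GRel' (k n : ℕ) (F : Fin n → Finset (Fin k)) : GVert' k n → GVert' k n → Prop
  | .inl (i, v), .inl (i', w) => i = i' ∧ BRel v w
  | .inr (.inl (j, v)), .inr (.inl (j', w)) => j = j' ∧ CRel n v w
  | .inr (.inr (.inl v)), .inr (.inr (.inl w)) => HRel 6 v w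
  | .inr (.inr (.inr (v, _))), .inr (.inr (.inr (w, _))) => ARel v w
  | .inr (.inl (j, v)), .inl (i, w) =>
      i ∈ F j ∧ w = .a ∧ (v = .c ∨ ∃ t, v = .cc t)
  | .inr (.inr (.inl v)), .inl (i, w) =>
      v = .u ⟨7, by omega⟩ ∧ (w = .a ∨ w = .b)
  | .inr (.inr (.inr (v, _))), .inr (.inr (.inl w)) =>
      v = .p1 ∧ w = .u ⟨7, by omega⟩
  | _, _ => False

/-- The graph `G'_F`. -/
def graphGF' (k n : ℕ) (F : Fin n → Finset (Fin k)) : SimpleGraph (GVert' k n) :=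
  SimpleGraph.fromRel (GRel' k n F)


section Aux

variable {k n : ℕ} {F : Fin n → Finset (Fin k)}

/-- Level function: distance-like potential measuring depth into the `H` part. -/
def lev : GVert k n → ℕ
  | .inr (.inr (.inl (.u i))) => (i : ℕ)
  | .inr (.inr (.inl (.x t))) => (t : ℕ) + 1
  | .inr (.inr (.inl (.y t))) => (t : ℕ) + 2
  | _ => 0

/-- The vertex `u_0` of the `H` part. -/
def u0 (k n : ℕ) : GVert k n := .inr (.inr (.inl (.u ⟨0, by omega⟩)))

/-- Membership in the `H` part. -/
def isH (v : GVert k n) : Prop := ∃ w : HVert (2 * n + 7), v = .inr (.inr (.inl w))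

lemma isH_of_lev_pos {v : GVert k n} (h : 1 ≤ lev v) : isH v := by
  rcases v with ⟨i, w⟩ | ⟨⟨j, w⟩ | w | ⟨w, z⟩⟩
  · simp [lev] at h
  · simp [lev] at h
  · exact ⟨w, rfl⟩
  · simp [lev] at h

lemma lev_u0 : lev (u0 k n) = 0 := rfl

lemma lev_lip {a b : GVert k n} (h : GRel k n F a b) :
    lev b ≤ lev a + 1 ∧ lev a ≤ lev b + 1 := by
  rcases a with ⟨i, v⟩ | ⟨⟨j, v⟩ | v | ⟨v, z⟩⟩ <;>
    rcases b with ⟨i', w⟩ | ⟨⟨j', w⟩ | w | ⟨w, z'⟩⟩ <;>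
    simp only [GRel] at h <;>
    try exact h.elim
  all_goals try (simp [lev])
  all_goals try (obtain ⟨rfl, -⟩ := h; simp [lev])
  all_goals try (obtain ⟨-, rfl⟩ := h; simp [lev])
  cases v <;> cases w <;> simp only [HRel] at h <;>
    first
      | exact h.elim
      | (subst h; simp [lev])
      | (simp only [lev]; omega)

lemma adj_iff {a b : GVert k n} :
    (graphGF k n F).Adj a b ↔ a ≠ b ∧ (GRel k n F a b ∨ GRel k n F b a) :=
  SimpleGraph.fromRel_adj _ _ _

lemma lev_lip_adj {a b : GVert k n} (h : (graphGF k n F).Adj a b) :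
    lev b ≤ lev a + 1 := by
  rw [adj_iff] at h
  rcases h.2 with h | h
  · exact (lev_lip h).1
  · exact (lev_lip h).2

/-- Any edge from outside `H` into `H` lands at `u_0`. -/
lemma adj_to_H {a b : GVert k n} (h : (graphGF k n F).Adj a b)
    (hb : isH b) (ha : ¬ isH a) : b = u0 k n := by
  obtain ⟨w, rfl⟩ := hb
  rw [adj_iff] at h
  rcases a with ⟨i, v⟩ | ⟨⟨j, v⟩ | v | ⟨v, z⟩⟩
  · rcases h.2 with h | h
    · exact absurd h (by simp [GRel])
    · simp only [GRel] at h
      rw [h.1]; rfl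
  · rcases h.2 with h | h <;> exact absurd h (by simp [GRel])
  · exact absurd ⟨v, rfl⟩ ha
  · rcases h.2 with h | h
    · simp only [GRel] at h
      rw [h.2]; rfl
    · exact absurd h (by simp [GRel])

/-- The unique neighbour of `u_{2n+8}` is `u_{2n+7}`. -/
lemma adj_uLast {v : GVert k n}
    (h : (graphGF k n F).Adj v (.inr (.inr (.inl (.u ⟨2 * n + 8, by omega⟩))))) :
    v = .inr (.inr (.inl (.u ⟨2 * n + 7, by omega⟩))) := by
  rw [adj_iff] at h
  obtain ⟨hne, h | h⟩ := h
  · rcases v with ⟨i, w⟩ | ⟨⟨j, w⟩ | w | ⟨w, z⟩⟩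
    · exact absurd h (by simp [GRel])
    · exact absurd h (by simp [GRel])
    · cases w with
      | u i =>
          simp only [GRel, HRel] at h
          have hi := i.isLt
          have : i = (⟨2 * n + 7, by omega⟩ : Fin (2 * n + 7 + 2)) := by
            apply Fin.ext
            simp only [Fin.val_mk] at h ⊢
            omega
          rw [this]
      | x t =>
          have ht := t.isLt
          simp only [GRel, HRel, Fin.val_mk] at h
          all_goals omega
      | y s =>
          have hs := s.isLt
          simp only [GRel, HRel, Fin.val_mk] at h
          all_goals omega
    · simp only [GRel] at h
      obtain ⟨-, hw⟩ := h
      exact absurd hw (by simp [Fin.ext_iff])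
  · rcases v with ⟨i, w⟩ | ⟨⟨j, w⟩ | w | ⟨w, z⟩⟩
    · simp only [GRel] at h
      obtain ⟨hw, -⟩ := h
      exact absurd hw (by simp [Fin.ext_iff])
    · exact absurd h (by simp [GRel])
    · cases w with
      | u i =>
          have hi := i.isLt
          simp only [GRel, HRel, Fin.val_mk] at h
          all_goals omega
      | x t =>
          have ht := t.isLt
          simp only [GRel, HRel, Fin.val_mk] at h
          all_goals omega
      | y s =>
          exact absurd h (by simp [GRel, HRel])
    · exact absurd h (by simp [GRel])

/-- Every neighbour of the vertex `k` of `B_0` lies outside the `H` part. -/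
lemma adj_kv {i0 : Fin k} {v : GVert k n}
    (h : (graphGF k n F).Adj v (.inl (i0, .k))) : ¬ isH v := by
  rintro ⟨w, rfl⟩
  rw [adj_iff] at h
  obtain ⟨-, h | h⟩ := h
  · simp only [GRel] at h
    rcases h.2 with h' | h' <;> exact BVert.noConfusion h'
  · exact h

lemma walk_ivt (c : ℕ) :
    ∀ {a b : GVert k n} (p : (graphGF k n F).Walk a b),
      lev a ≤ c → c ≤ lev b → ∃ v ∈ p.support, lev v = c := by
  intro a b p
  induction p with
  | nil => intro h1 h2; exact ⟨_, SimpleGraph.Walk.start_mem_support _, by omega⟩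
  | @cons a a' b hadj q ih =>
      intro h1 h2
      rcases Nat.lt_or_ge (lev a) c with hlt | hge
      · have hmid : lev a' ≤ c := by
          have := lev_lip_adj (F := F) hadj
          omega
        obtain ⟨v, hv, hl⟩ := ih hmid h2
        exact ⟨v, by simp [hv], hl⟩
      · exact ⟨a, SimpleGraph.Walk.start_mem_support _, by omega⟩

lemma walk_u0 :
    ∀ {a b : GVert k n} (p : (graphGF k n F).Walk a b),
      ¬ isH a → isH b → b ≠ u0 k n → u0 k n ∈ p.support := by
  intro a b p
  induction p with
  | nil => intro ha hb hbne; exact absurd hb ha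
  | @cons a a' b hadj q ih =>
      intro ha hb hbne
      by_cases ha' : isH a'
      · have : a' = u0 k n := adj_to_H hadj ha' ha
        rw [SimpleGraph.Walk.support_cons]
        exact List.mem_cons_of_mem _ (this ▸ SimpleGraph.Walk.start_mem_support q)
      · rw [SimpleGraph.Walk.support_cons]
        exact List.mem_cons_of_mem _ (ih ha' hb hbne)

instance : Finite (HVert m) := by
  have hinj : Function.Injective (fun v : HVert m => match v with
      | .u i => (Sum.inl i : Fin (m + 2) ⊕ Fin (m - 1) ⊕ Fin (m - 1))
      | .x t => Sum.inr (Sum.inl t)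
      | .y t => Sum.inr (Sum.inr t)) := by
    intro a b h
    cases a <;> cases b <;> simp_all
  exact Finite.of_injective _ hinj

/-- Inclusion of an induced subgraph. -/
def inclHom (G : SimpleGraph V) (S : Set V) : G.induce S →g G :=
  ⟨Subtype.val, fun h => h⟩

end Aux

theorem connDomSet_contains_u0_and_many_H_vertices (k n : ℕ) (hk : 1 ≤ k)
    (hn : 1 ≤ n) (F : Fin n → Finset (Fin k)) (hF : ∀ j, (F j).Nonempty)
    (S : Set (GVert k n)) (hS : IsConnDomSet (graphGF k n F) S) :
    (Sum.inr (Sum.inr (Sum.inl (HVert.u ⟨0, by omega⟩))) : GVert k n) ∈ S ∧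
    2 * n + 8 ≤
      (S ∩ {v : GVert k n | ∃ w : HVert (2 * n + 7), v = .inr (.inr (.inl w))}).ncard := by

  classical
  obtain ⟨hdom, hconn⟩ := hS
  have hdeep : ∃ w : GVert k n, w ∈ S ∧ isH w ∧ w ≠ u0 k n ∧ 2 * n + 7 ≤ lev w := by
    rcases hdom (.inr (.inr (.inl (.u ⟨2 * n + 8, by omega⟩)))) with hmem | ⟨v, hv, hadj⟩
    · refine ⟨_, hmem, ⟨_, rfl⟩, ?_, ?_⟩
      · simp [u0, Fin.ext_iff]
      · simp [lev]
    · refine ⟨v, hv, ?_⟩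
      rw [adj_uLast hadj]
      refine ⟨⟨_, rfl⟩, ?_, ?_⟩
      · simp [u0, Fin.ext_iff]
      · simp [lev]
  obtain ⟨w, hwS, hwH, hwne, hwlev⟩ := hdeep
  have hout : ∃ o : GVert k n, o ∈ S ∧ ¬ isH o := by
    rcases hdom (.inl (⟨0, hk⟩, .k)) with hmem | ⟨v, hv, hadj⟩
    · exact ⟨_, hmem, by rintro ⟨w, hw⟩; exact Sum.inl_ne_inr hw⟩
    · exact ⟨v, hv, adj_kv hadj⟩
  obtain ⟨o, hoS, hoH⟩ := hout
  have hu0S : u0 k n ∈ S := by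
    obtain ⟨q⟩ := hconn.preconnected ⟨o, hoS⟩ ⟨w, hwS⟩
    have hmem := walk_u0 (F := F) (q.map (inclHom _ S)) (by exact hoH) (by exact hwH)
      (by exact hwne)
    rw [SimpleGraph.Walk.support_map, List.mem_map] at hmem
    obtain ⟨z, hz, hz2⟩ := hmem
    have hzS : (inclHom (graphGF k n F) S) z ∈ S := z.2
    rwa [hz2] at hzS
  refine ⟨hu0S, ?_⟩
  obtain ⟨q⟩ := hconn.preconnected ⟨u0 k n, hu0S⟩ ⟨w, hwS⟩
  set p := q.map (inclHom _ S) with hp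
  have hsupS : ∀ v ∈ p.support, v ∈ S := by
    intro v hv
    rw [hp, SimpleGraph.Walk.support_map, List.mem_map] at hv
    obtain ⟨z, hz, hz2⟩ := hv
    exact hz2 ▸ z.2
  set T := S ∩ {v : GVert k n | ∃ w : HVert (2 * n + 7), v = .inr (.inr (.inl w))} with hT
  have hex : ∀ c : Fin (2 * n + 8), ∃ v, v ∈ T ∧ lev v = (c : ℕ) := by
    intro c
    rcases Nat.eq_zero_or_pos (c : ℕ) with hc | hc
    · exact ⟨u0 k n, ⟨hu0S, ⟨_, rfl⟩⟩, by rw [lev_u0, hc]⟩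
    · have h1 : lev ((inclHom (graphGF k n F) S) ⟨u0 k n, hu0S⟩) ≤ (c : ℕ) := by
        show lev (u0 k n) ≤ (c : ℕ)
        rw [lev_u0]; omega
      have h2 : (c : ℕ) ≤ lev ((inclHom (graphGF k n F) S) ⟨w, hwS⟩) := by
        show (c : ℕ) ≤ lev w
        have := c.isLt; omega
      obtain ⟨v, hv, hl⟩ := walk_ivt (F := F) (c : ℕ) p h1 h2
      exact ⟨v, ⟨hsupS v hv, isH_of_lev_pos (hl ▸ hc)⟩, hl⟩
  choose g hg1 hg2 using hex
  have hfin : T.Finite := by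
    apply Set.Finite.inter_of_right
    have hre : {v : GVert k n | ∃ w : HVert (2 * n + 7), v = .inr (.inr (.inl w))} =
        Set.range (fun w : HVert (2 * n + 7) => (.inr (.inr (.inl w)) : GVert k n)) := by
      ext v; simp [Set.range, eq_comm]
    rw [hre]
    exact Set.finite_range _
  haveI : Finite T := hfin.to_subtype
  have hinj : Function.Injective (fun c : Fin (2 * n + 8) => (⟨g c, hg1 c⟩ : T)) := by
    intro c c' h
    apply Fin.ext
    have := congrArg (fun z : T => lev z.1) h
    simpa [hg2] using this
  have hcard := Nat.card_le_card_of_injective _ hinj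
  rwa [Nat.card_eq_fintype_card, Fintype.card_fin, Nat.card_coe_set_eq] at hcard

end CDG
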